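/- Let f be a càdlàg function on [0,T] with no negative jumps that is 'good': the set Y(f) of right endpoints of excursion intervals of f has no isolated points, the complement of the union of excursion intervals in [0, sup Y(f)] has Lebesgue measure zero, and f does not attain a local minimum at any point of Y(f). Then f is continuous at every point r ∈ Y(f). -/

import Mathlib

open MeasureTheory

/-- `(l, r)` is an excursion interval of `f` (on `[0, T]`): a nonempty interval
with `f(l−) = f(r−) = inf_{t ≤ r} f(t)` and `f(t) > inf_{s ≤ l} f(s)` on `(l,r)`. -/
def ExcursionInterval (f : ℝ → ℝ) (T l r : ℝ) : Prop :=
  0 ≤ l ∧ l < r ∧ r ≤ T ∧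
  Function.leftLim f l = sInf (f '' Set.Icc 0 r) ∧
  Function.leftLim f r = sInf (f '' Set.Icc 0 r) ∧
  ∀ t ∈ Set.Ioo l r, sInf (f '' Set.Icc 0 l) < f t

/-- The set `Y(f)` of right endpoints of excursion intervals of `f` on `[0,T]`. -/
def ExcEndpoints (f : ℝ → ℝ) (T : ℝ) : Set ℝ :=
  {r | ∃ l, ExcursionInterval f T l r}

/-- `f` is good on `[0,T]`: `Y(f)` has no isolated points, the complement of the
union of the excursion intervals in `[0, sup Y(f)]` is Lebesgue null, and `f` has
no local minimum at any point of `Y(f)`. -/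
def GoodOn (f : ℝ → ℝ) (T : ℝ) : Prop :=
  (∀ r ∈ ExcEndpoints f T, r ∈ closure (ExcEndpoints f T \ {r})) ∧
  volume (Set.Icc 0 (sSup (ExcEndpoints f T)) \
    ⋃ (l : ℝ) (r : ℝ) (_ : ExcursionInterval f T l r), Set.Ioo l r) = 0 ∧
  ∀ r ∈ ExcEndpoints f T, ¬ IsLocalMin f r

open Set Filter Function Topology

/-- A family of pairwise-disjoint nonempty open intervals in ℝ is countable. -/
lemma aux_countable_of_disjoint_Ioo {s : Set ℝ} (a b : ℝ → ℝ)
    (hab : ∀ x ∈ s, a x < b x)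
    (hdisj : ∀ x ∈ s, ∀ y ∈ s, x ≠ y →
      Disjoint (Set.Ioo (a x) (b x)) (Set.Ioo (a y) (b y))) : s.Countable := by
  have hq : ∀ x : s, ∃ q : ℚ, (q : ℝ) ∈ Set.Ioo (a x) (b x) := by
    rintro ⟨x, hx⟩
    obtain ⟨q, hq1, hq2⟩ := exists_rat_btwn (hab x hx)
    exact ⟨q, hq1, hq2⟩
  choose q hmem using hq
  have hinj : Function.Injective q := by
    intro x y hxy
    by_contra hne
    have hne' : (x : ℝ) ≠ (y : ℝ) := fun h => hne (Subtype.ext h)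
    have := hdisj x x.2 y y.2 hne'
    exact (Set.disjoint_left.1 this (hmem x)) (hxy ▸ hmem y)
  have : Countable s := hinj.countable
  exact Set.countable_coe_iff.mp this

/-- A càdlàg function is bounded below on compact intervals. -/
lemma aux_bddBelow (f : ℝ → ℝ)
    (hright : ∀ x : ℝ, ContinuousWithinAt f (Set.Ici x) x)
    (hleft : ∀ x : ℝ, Filter.Tendsto f (nhdsWithin x (Set.Iio x))
      (nhds (Function.leftLim f x))) (a b : ℝ) :
    BddBelow (f '' Set.Icc a b) := by
  have key : ∀ x : ℝ, ∃ U, U ∈ 𝓝 x ∧ BddBelow (f '' U) := by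
    intro x
    have h1 : ∀ᶠ t in 𝓝[≥] x, f x - 1 < f t :=
      (hright x).eventually (eventually_gt_nhds (by linarith))
    have h2 : ∀ᶠ t in 𝓝[<] x, Function.leftLim f x - 1 < f t :=
      (hleft x).eventually (eventually_gt_nhds (by linarith))
    have h3 : ∀ᶠ t in 𝓝 x, min (f x - 1) (Function.leftLim f x - 1) < f t := by
      rw [← nhdsLT_sup_nhdsGE x, Filter.eventually_sup]
      constructor
      · exact h2.mono fun t ht => lt_of_le_of_lt (min_le_right _ _) ht
      · exact h1.mono fun t ht => lt_of_le_of_lt (min_le_left _ _) ht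
    refine ⟨_, h3, ⟨min (f x - 1) (Function.leftLim f x - 1), ?_⟩⟩
    rintro v ⟨t, ht, rfl⟩
    exact le_of_lt ht
  choose U hU hUb using key
  obtain ⟨s, hs, hsub⟩ := isCompact_Icc.elim_nhds_subcover U (fun x _ => hU x)
  have himg : f '' Set.Icc a b ⊆ ⋃ x ∈ (s : Set ℝ), f '' U x := by
    rintro v ⟨t, ht, rfl⟩
    obtain ⟨x, hxs, hxt⟩ := Set.mem_iUnion₂.1 (hsub ht)
    exact Set.mem_biUnion hxs (Set.mem_image_of_mem f hxt)
  have : BddBelow (⋃ x ∈ (s : Set ℝ), f '' U x) :=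
    (Set.Finite.bddBelow_biUnion s.finite_toSet).2 fun i _ => hUb i
  exact this.mono himg

/-- A good càdlàg function without negative jumps is continuous at every right
endpoint of an excursion interval. -/
theorem stmt13 (f : ℝ → ℝ) (T : ℝ)
    (hright : ∀ x : ℝ, ContinuousWithinAt f (Set.Ici x) x)
    (hleft : ∀ x : ℝ, Filter.Tendsto f (nhdsWithin x (Set.Iio x))
      (nhds (Function.leftLim f x)))
    (hnonegjump : ∀ t : ℝ, Function.leftLim f t ≤ f t)
    (hgood : GoodOn f T) :
    ∀ r ∈ ExcEndpoints f T, ContinuousAt f r := by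
  obtain ⟨hiso, -, -⟩ := hgood
  intro r hr
  -- continuity follows from leftLim f r = f r
  rcases eq_or_lt_of_le (hnonegjump r) with heq | hjump
  · rw [ContinuousAt, ← nhdsLT_sup_nhdsGE r, Filter.tendsto_sup]
    exact ⟨heq ▸ hleft r, hright r⟩
  exfalso
  obtain ⟨l, h0l, hlr, hrT, hLl, hLr, hint⟩ := hr
  set m : ℝ := sInf (f '' Set.Icc 0 r) with hm
  have hbdd : ∀ c : ℝ, BddBelow (f '' Set.Icc 0 c) := aux_bddBelow f hright hleft 0
  have h0r : (0:ℝ) ≤ r := h0l.trans hlr.le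
  rw [hLr] at hjump   -- hjump : m < f r
  -- Step 1 : sInf (f '' Icc 0 l) = m
  have hMl : sInf (f '' Set.Icc 0 l) = m := by
    refine le_antisymm ?_ ?_
    · -- ≤ : via left limit at r
      have hev : ∀ᶠ t in 𝓝[<] r, sInf (f '' Set.Icc 0 l) ≤ f t := by
        filter_upwards [Ioo_mem_nhdsLT hlr] with t ht
        exact (hint t ht).le
      have := ge_of_tendsto (hleft r) hev
      rwa [hLr] at this
    · exact csInf_le_csInf (hbdd r) ⟨f 0, Set.mem_image_of_mem f (Set.mem_Icc.2 ⟨le_refl 0, h0l⟩)⟩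
        (Set.image_mono (f := f) (Set.Icc_subset_Icc_right hlr.le))
  have hF2 : ∀ t ∈ Set.Ioo l r, m < f t := fun t ht => hMl ▸ hint t ht
  -- Step 2 : sInf (f '' Icc 0 y) = m for y ∈ (l, r]
  have hF1 : ∀ y ∈ Set.Ioc l r, sInf (f '' Set.Icc 0 y) = m := by
    intro y hy
    have h0y : (0:ℝ) ≤ y := h0l.trans hy.1.le
    refine le_antisymm ?_ ?_
    · rw [← hMl]
      exact csInf_le_csInf (hbdd y) ⟨f 0, Set.mem_image_of_mem f (Set.mem_Icc.2 ⟨le_refl 0, h0l⟩)⟩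
        (Set.image_mono (f := f) (Set.Icc_subset_Icc_right hy.1.le))
    · refine le_csInf ⟨f 0, Set.mem_image_of_mem f (Set.mem_Icc.2 ⟨le_refl 0, h0y⟩)⟩ ?_
      rintro v ⟨t, ht, rfl⟩
      rcases le_or_gt t l with htl | hlt
      · exact hMl ▸ csInf_le (hbdd l) (Set.mem_image_of_mem f (Set.mem_Icc.2 ⟨ht.1, htl⟩))
      · rcases lt_or_eq_of_le (ht.2.trans hy.2) with htr | htr
        · exact (hF2 t ⟨hlt, htr⟩).le
        · rw [htr]; exact le_trans (le_of_eq hLr.symm) (hnonegjump r)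
  -- Step 3 (key) : around a point with a positive jump there are no endpoints on the right
  have key : ∀ z : ℝ, 0 ≤ z → sInf (f '' Set.Icc 0 z) = m → m < f z →
      ∃ δ > 0, ∀ y ∈ ExcEndpoints f T, y ∉ Set.Ioo z (z + δ) := by
    intro z hz0 hzinf hzj
    set c : ℝ := (m + f z) / 2 with hc
    have hc1 : m < c := by rw [hc]; linarith
    have hc2 : c < f z := by rw [hc]; linarith
    have hev : ∀ᶠ t in 𝓝[≥] z, c < f t := (hright z).eventually (eventually_gt_nhds hc2)
    obtain ⟨u, hu, hsub⟩ := mem_nhdsGE_iff_exists_Ico_subset.1 hev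
    refine ⟨u - z, by simpa using hu, ?_⟩
    rintro y ⟨l₂, ⟨-, -, -, -, hLy, -⟩⟩ hyIoo
    have hyu : y < u := by have := hyIoo.2; linarith
    have h1 : Function.leftLim f y ≤ m := by
      rw [hLy, ← hzinf]
      exact csInf_le_csInf (hbdd y)
        ⟨f 0, Set.mem_image_of_mem f (Set.mem_Icc.2 ⟨le_refl 0, hz0⟩)⟩
        (Set.image_mono (f := f) (Set.Icc_subset_Icc_right hyIoo.1.le))
    have h2 : c ≤ Function.leftLim f y := by
      refine ge_of_tendsto (hleft y) ?_
      filter_upwards [Ioo_mem_nhdsLT hyIoo.1] with t ht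
      exact (hsub ⟨ht.1.le, ht.2.trans hyu⟩).le
    linarith
  -- Z : endpoints inside (l, r)
  set Z : Set ℝ := {z | z ∈ ExcEndpoints f T ∧ z ∈ Set.Ioo l r} with hZ
  have hZkey : ∀ z ∈ Z, ∃ δ > 0, ∀ y ∈ ExcEndpoints f T, y ∉ Set.Ioo z (z + δ) :=
    fun z hz => key z (h0l.trans hz.2.1.le) (hF1 z ⟨hz.2.1, hz.2.2.le⟩) (hF2 z hz.2)
  -- accumulation from the left by Z-points
  have hacc : ∀ z : ℝ, (z ∈ Z ∨ z = r) → ∀ η > 0, ∃ z' ∈ Z, z' ∈ Set.Ioo (z - η) z := by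
    intro z hz η hη
    have hzY : z ∈ ExcEndpoints f T := by
      rcases hz with hz | hz
      exacts [hz.1, hz ▸ ⟨l, h0l, hlr, hrT, hLl, hLr, hint⟩]
    have hzl : l < z := by rcases hz with hz | hz; exacts [hz.2.1, hz ▸ hlr]
    have hzr : z ≤ r := by rcases hz with hz | hz; exacts [hz.2.2.le, hz.le]
    have hkey : ∃ δ > 0, ∀ y ∈ ExcEndpoints f T, y ∉ Set.Ioo z (z + δ) := by
      rcases hz with hz | hz
      · exact hZkey z hz
      · rw [hz]; exact key r h0r hm.symm hjump
    obtain ⟨δ, hδ, hδno⟩ := hkey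
    have hcl := hiso z hzY
    rw [Metric.mem_closure_iff] at hcl
    obtain ⟨y, hy, hdist⟩ := hcl (min η (min δ (z - l)))
      (lt_min hη (lt_min hδ (by linarith)))
    have hyz : y ≠ z := fun h => hy.2 (by simp [h])
    rw [Real.dist_eq, abs_lt] at hdist
    have hd1 : z - y < η := by
      have : -(min η (min δ (z - l))) < z - y := hdist.1
      have h2 : z - y < min η (min δ (z - l)) := hdist.2
      exact lt_of_lt_of_le h2 (min_le_left _ _)
    have hd2 : z - y < z - l := lt_of_lt_of_le hdist.2 ((min_le_right _ _).trans (min_le_right _ _))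
    have hd3 : y - z < δ := by
      have : -(min η (min δ (z - l))) < z - y := hdist.1
      have := neg_lt_of_neg_lt this
      have h4 : y - z < min η (min δ (z - l)) := by linarith
      exact lt_of_lt_of_le h4 ((min_le_right _ _).trans (min_le_left _ _))
    rcases lt_or_gt_of_ne hyz with hlt | hgt
    · exact ⟨y, ⟨hy.1, by linarith, lt_of_lt_of_le hlt hzr⟩, by linarith, hlt⟩
    · exact absurd ⟨hgt, by linarith⟩ (hδno y hy.1)
  -- leftLim f z = m for z ∈ Z
  have hZlim : ∀ z ∈ Z, Function.leftLim f z = m := by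
    intro z hz
    obtain ⟨l₂, ⟨-, -, -, -, hLz, -⟩⟩ := hz.1
    rw [hLz]
    exact hF1 z ⟨hz.2.1, hz.2.2.le⟩
  -- left-accumulation points of Z in (l, r] are endpoints
  have hll : ∀ w : ℝ, l < w → w ≤ r →
      (∀ η > 0, ∃ z ∈ Z, z ∈ Set.Ioo (w - η) w) → w ∈ ExcEndpoints f T := by
    intro w hlw hwr hw
    have hFw : sInf (f '' Set.Icc 0 w) = m := hF1 w ⟨hlw, hwr⟩
    have hLw : Function.leftLim f w = m := by
      have hseq : ∀ n : ℕ, ∃ t, t ∈ Set.Ioo (w - 1/(n+1)) w ∧ |f t - m| < 1/(n+1) := by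
        intro n
        have hpos : (0:ℝ) < 1/(n+1) := by positivity
        obtain ⟨z, hzZ, hzIoo⟩ := hw (1/(n+1)) hpos
        have htd : Filter.Tendsto f (𝓝[<] z) (𝓝 m) := hZlim z hzZ ▸ hleft z
        have hev : ∀ᶠ t in 𝓝[<] z, |f t - m| < 1/(n+1) := by
          have := Metric.tendsto_nhds.1 htd (1/(n+1)) hpos
          filter_upwards [this] with t ht
          rwa [Real.dist_eq] at ht
        have hev2 : ∀ᶠ t in 𝓝[<] z, t ∈ Set.Ioo (w - 1/(n+1)) z :=
          Ioo_mem_nhdsLT hzIoo.1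
        obtain ⟨t, htabs, htI⟩ := (hev.and hev2).exists
        exact ⟨t, ⟨htI.1, htI.2.trans hzIoo.2⟩, htabs⟩
      choose t ht1 ht2 using hseq
      have hlow : Filter.Tendsto (fun n : ℕ => w - 1/(n+1)) atTop (𝓝 w) := by
        have h0 := tendsto_one_div_add_atTop_nhds_zero_nat (𝕜 := ℝ)
        have := (tendsto_const_nhds : Filter.Tendsto (fun _ : ℕ => w) atTop (𝓝 w)).sub h0
        simpa using this
      have htw : Filter.Tendsto t atTop (𝓝 w) :=
        tendsto_of_tendsto_of_tendsto_of_le_of_le hlow tendsto_const_nhds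
          (fun n => (ht1 n).1.le) (fun n => (ht1 n).2.le)
      have htw' : Filter.Tendsto t atTop (𝓝[<] w) :=
        tendsto_nhdsWithin_of_tendsto_nhds_of_eventually_within _ htw
          (Filter.Eventually.of_forall fun n => (ht1 n).2)
      have h5 : Filter.Tendsto (fun n => f (t n)) atTop (𝓝 (Function.leftLim f w)) :=
        (hleft w).comp htw'
      have h6 : Filter.Tendsto (fun n => f (t n)) atTop (𝓝 m) := by
        have hup : Filter.Tendsto (fun n : ℕ => m + 1/(n+1)) atTop (𝓝 m) := by
          have h0 := tendsto_one_div_add_atTop_nhds_zero_nat (𝕜 := ℝ)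
          have := (tendsto_const_nhds : Filter.Tendsto (fun _ : ℕ => m) atTop (𝓝 m)).add h0
          simpa using this
        have hdown : Filter.Tendsto (fun n : ℕ => m - 1/(n+1)) atTop (𝓝 m) := by
          have h0 := tendsto_one_div_add_atTop_nhds_zero_nat (𝕜 := ℝ)
          have := (tendsto_const_nhds : Filter.Tendsto (fun _ : ℕ => m) atTop (𝓝 m)).sub h0
          simpa using this
        refine tendsto_of_tendsto_of_tendsto_of_le_of_le hdown hup ?_ ?_
        · intro n
          have := abs_lt.1 (ht2 n)
          linarith [this.1]
        · intro n
          have := abs_lt.1 (ht2 n)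
          linarith [this.2]
      exact tendsto_nhds_unique h5 h6
    refine ⟨l, h0l, hlw, hwr.trans hrT, ?_, ?_, ?_⟩
    · rw [hFw]; exact hLl
    · rw [hFw]; exact hLw
    · intro t ht
      rw [hMl]
      exact hF2 t ⟨ht.1, lt_of_lt_of_le ht.2 hwr⟩
  -- countability of Z
  have hZcount : Z.Countable := by
    choose! δ hδpos hδ using hZkey
    have main : ∀ x ∈ Z, ∀ y ∈ Z, x < y →
        Disjoint (Set.Ioo x (x + δ x)) (Set.Ioo y (y + δ y)) := by
      intro x hx y hy hxy
      have hnot := hδ x hx y hy.1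
      have hle : x + δ x ≤ y := by
        by_contra hlt
        exact hnot ⟨hxy, lt_of_not_ge hlt⟩
      rw [Set.disjoint_left]
      intro t ht1 ht2
      exact absurd (ht1.2.trans_le hle) (not_lt.2 ht2.1.le)
    refine aux_countable_of_disjoint_Ioo (fun x => x) (fun x => x + δ x)
      (fun x hx => lt_add_of_pos_right _ (hδpos x hx)) ?_
    intro x hx y hy hxy
    rcases hxy.lt_or_gt with h | h
    · exact main x hx y hy h
    · exact (main y hy x hx h).symm
  -- the closure of Z
  set C : Set ℝ := closure Z with hC
  have hZsub : Z ⊆ Set.Icc l r := fun z hz => ⟨hz.2.1.le, hz.2.2.le⟩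
  have hCsub : C ⊆ Set.Icc l r := closure_minimal hZsub isClosed_Icc
  have hCcount : C.Countable := by
    set LI : Set ℝ := {w | w ∈ C ∧ ∃ η > 0, ∀ z ∈ Z, z ∉ Set.Ioo (w - η) w} with hLI
    have hLIcount : LI.Countable := by
      choose! η hηpos hηno using fun w (hw : w ∈ LI) => hw.2
      have main : ∀ x ∈ LI, ∀ y ∈ LI, x < y →
          Disjoint (Set.Ioo (x - η x) x) (Set.Ioo (y - η y) y) := by
        intro x hx y hy hxy
        rw [Set.disjoint_left]
        intro t ht1 ht2
        have hxIoo : x ∈ Set.Ioo (y - η y) y := ⟨lt_trans ht2.1 ht1.2, hxy⟩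
        have hx' : x ∈ closure Z := hx.1
        rw [Metric.mem_closure_iff] at hx'
        obtain ⟨z, hzZ, hzd⟩ := hx' (min (x - (y - η y)) (y - x))
          (lt_min (by linarith [hxIoo.1]) (by linarith [hxIoo.2]))
        rw [Real.dist_eq, abs_lt] at hzd
        refine hηno y hy z hzZ ⟨?_, ?_⟩
        · have := lt_of_lt_of_le hzd.2 (min_le_left _ _)
          linarith
        · have : -(min (x - (y - η y)) (y - x)) < x - z := hzd.1
          have h2 : -(y - x) ≤ -(min (x - (y - η y)) (y - x)) := by
            simp only [neg_le_neg_iff]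
            exact min_le_right _ _
          linarith
      refine aux_countable_of_disjoint_Ioo (fun w => w - η w) (fun w => w)
        (fun w hw => by linarith [hηpos w hw]) ?_
      intro x hx y hy hxy
      rcases hxy.lt_or_gt with h | h
      · exact main x hx y hy h
      · exact (main y hy x hx h).symm
    have hsub2 : C ⊆ Z ∪ {r} ∪ LI := by
      intro w hwC
      by_cases hacc' : ∀ η > 0, ∃ z ∈ Z, z ∈ Set.Ioo (w - η) w
      · have hlw : l < w := by
          obtain ⟨z, hzZ, hzI⟩ := hacc' 1 one_pos
          exact hzZ.2.1.trans hzI.2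
        have hwr : w ≤ r := (hCsub hwC).2
        have hwY := hll w hlw hwr hacc'
        rcases lt_or_eq_of_le hwr with h | h
        · exact Or.inl (Or.inl ⟨hwY, hlw, h⟩)
        · exact Or.inl (Or.inr (by simp [h]))
      · push_neg at hacc'
        obtain ⟨η, hη, hno⟩ := hacc'
        exact Or.inr ⟨hwC, η, hη, hno⟩
    exact ((hZcount.union (Set.countable_singleton r)).union hLIcount).mono hsub2
  have hCperf : Perfect C := by
    rw [← preperfect_iff_perfect_closure]
    intro z hz
    rw [accPt_iff_nhds]
    intro U hU
    obtain ⟨ε, hε, hball⟩ := Metric.mem_nhds_iff.1 hU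
    obtain ⟨z', hz'Z, hz'⟩ := hacc z (Or.inl hz) ε hε
    refine ⟨z', ⟨hball ?_, hz'Z⟩, hz'.2.ne⟩
    rw [Metric.mem_ball, Real.dist_eq, abs_lt]
    constructor <;> [linarith [hz'.1]; linarith [hz'.2]]
  have hCne : C.Nonempty := by
    obtain ⟨z, hzZ, -⟩ := hacc r (Or.inr rfl) 1 one_pos
    exact ⟨z, subset_closure hzZ⟩
  -- a countable nonempty perfect set : contradiction
  obtain ⟨g, hgC, -, hginj⟩ := hCperf.exists_nat_bool_injection hCne
  have hcnt : Countable (ℕ → Bool) := by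
    have h1 : (Set.range g).Countable := hCcount.mono hgC
    have : Countable (Set.range g) := h1.to_subtype
    exact (Equiv.ofInjective g hginj).countable_iff.2 this
  have hsetinj : ∃ e : Set ℕ → ℕ, Function.Injective e := by
    classical
    have e1 : Function.Injective (fun (s : Set ℕ) => (fun n => decide (n ∈ s) : ℕ → Bool)) := by
      intro s t hst
      ext n
      have := congrFun hst n
      simpa using this
    obtain ⟨e2, he2⟩ := Countable.exists_injective_nat (ℕ → Bool)
    exact ⟨_, he2.comp e1⟩
  obtain ⟨e, he⟩ := hsetinj
  exact Function.cantor_injective e he
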